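/- Let Ĥ be self-adjoint on a Hilbert space H, ĥ self-adjoint on a Hilbert space K, and û : H → K a bounded operator with û D(Ĥ) ⊆ D(ĥ) such that the operator Ĥ û* − û* ĥ is bounded with norm ≤ δ. Then for all t ∈ ℝ, ‖e^{−iĤt} û* − û* e^{−iĥt}‖ ≤ δ |t|. -/

import Mathlib

open ContinuousLinearMap

local notation "⟪" x ", " y "⟫" => @inner ℂ _ _ x y

/-- The generator commutes with the group it generates. -/
lemma gen_commute {E : Type*} [NormedAddCommGroup E] [InnerProductSpace ℂ E]
    (D : Submodule ℂ E) (A : D →ₗ[ℂ] E) (U : ℝ → E →L[ℂ] E)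
    (hU0 : U 0 = 1) (hUgrp : ∀ s t : ℝ, U (s + t) = U s ∘L U t)
    (hUdom : ∀ (t : ℝ), ∀ x ∈ D, U t x ∈ D)
    (hgen : ∀ (x : D) (t : ℝ),
      HasDerivAt (fun s : ℝ => U s (x : E)) (U t (-(Complex.I • A x))) t)
    (v : D) (t : ℝ) :
    A ⟨U t v, hUdom t v v.2⟩ = U t (A v) := by
  set w : D := ⟨U t v, hUdom t v v.2⟩ with hw
  have h1 := hgen v t
  have h0 : HasDerivAt (fun σ : ℝ => U σ (w : E)) (U 0 (-(Complex.I • A w))) (t - t) := by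
    simpa using hgen w 0
  have hc : HasDerivAt (fun s : ℝ => s - t) (1 : ℝ) t := (hasDerivAt_id t).sub_const t
  have h2 : HasDerivAt ((fun σ : ℝ => U σ (w : E)) ∘ fun s : ℝ => s - t)
      ((1:ℝ) • U 0 (-(Complex.I • A w))) t :=
    HasDerivAt.scomp_of_eq t (hgen w 0) hc (by ring)
  have hfun : ((fun σ : ℝ => U σ (w : E)) ∘ fun s : ℝ => s - t) = fun s : ℝ => U s (v : E) := by
    funext s
    show U (s - t) (U t v) = U s v
    rw [← ContinuousLinearMap.comp_apply, ← hUgrp, sub_add_cancel]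
  rw [hfun] at h2
  have huniq := h1.unique h2
  rw [hU0] at huniq
  simp only [one_smul, ContinuousLinearMap.one_apply, map_neg, map_smul] at huniq
  have : Complex.I • U t (A v) = Complex.I • (A w : E) := by
    have := neg_injective huniq
    simpa using this
  exact (smul_right_injective E Complex.I_ne_zero this).symm

/-- Let `HH` be self-adjoint on a Hilbert space `H` (a symmetric operator
`Hop` on a dense domain `DH` generating the unitary group `UH t = e^{-i HH t}`), let `hh` be
self-adjoint on a Hilbert space `K` (a symmetric operator `hop` on a dense domain `DK`
generating the unitary group `UK t = e^{-i hh t}`), and let `u : H →L K` be a bounded operator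
whose adjoint `u*` maps `DK` into `DH`, such that the intertwining defect `HH u* - u* hh`
extends to a bounded operator `C` of norm `≤ δ`.  Then for all `t ∈ ℝ`,
`‖e^{-i HH t} u* - u* e^{-i hh t}‖ ≤ δ |t|`. -/
theorem space_adiabatic_stmt6
    {H K : Type*} [NormedAddCommGroup H] [InnerProductSpace ℂ H] [CompleteSpace H]
    [NormedAddCommGroup K] [InnerProductSpace ℂ K] [CompleteSpace K]
    (DH : Submodule ℂ H) (hdenseH : Dense (DH : Set H))
    (Hop : DH →ₗ[ℂ] H)
    (hsymH : ∀ x y : DH, (inner ℂ (Hop x) (y : H) : ℂ) = inner ℂ (x : H) (Hop y))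
    (UH : ℝ → H →L[ℂ] H)
    (hUH0 : UH 0 = 1)
    (hUHgrp : ∀ s t : ℝ, UH (s + t) = UH s ∘L UH t)
    (hUHiso : ∀ (t : ℝ) (x : H), ‖UH t x‖ = ‖x‖)
    (hUHdom : ∀ (t : ℝ), ∀ x ∈ DH, UH t x ∈ DH)
    (hgenH : ∀ (x : DH) (t : ℝ),
      HasDerivAt (fun s : ℝ => UH s (x : H)) (UH t (-(Complex.I • Hop x))) t)
    (DK : Submodule ℂ K) (hdenseK : Dense (DK : Set K))
    (hop : DK →ₗ[ℂ] K)
    (hsymK : ∀ x y : DK, (inner ℂ (hop x) (y : K) : ℂ) = inner ℂ (x : K) (hop y))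
    (UK : ℝ → K →L[ℂ] K)
    (hUK0 : UK 0 = 1)
    (hUKgrp : ∀ s t : ℝ, UK (s + t) = UK s ∘L UK t)
    (hUKiso : ∀ (t : ℝ) (x : K), ‖UK t x‖ = ‖x‖)
    (hUKdom : ∀ (t : ℝ), ∀ x ∈ DK, UK t x ∈ DK)
    (hgenK : ∀ (x : DK) (t : ℝ),
      HasDerivAt (fun s : ℝ => UK s (x : K)) (UK t (-(Complex.I • hop x))) t)
    (u : H →L[ℂ] K) (δ : ℝ)
    (hadjdom : ∀ x ∈ DK, adjoint u x ∈ DH)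
    (C : K →L[ℂ] H) (hC : ‖C‖ ≤ δ)
    (hdefect : ∀ x : DK, C x = Hop ⟨adjoint u x, hadjdom x x.2⟩ - adjoint u (hop x)) :
    ∀ t : ℝ, ‖UH t ∘L adjoint u - adjoint u ∘L UK t‖ ≤ δ * |t| := by
  intro t
  have hδ0 : 0 ≤ δ := le_trans (norm_nonneg C) hC
  have hM0 : 0 ≤ δ * |t| := mul_nonneg hδ0 (abs_nonneg t)
  set T : K →L[ℂ] H := UH t ∘L adjoint u - adjoint u ∘L UK t with hT
  -- adjoint relation for the unitary group on H
  have hUHadj : ∀ (s : ℝ) (a b : H), ⟪UH s a, b⟫ = ⟪a, UH (-s) b⟫ := by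
    intro s a b
    have hiso : ∀ x y : H, ⟪UH s x, UH s y⟫ = ⟪x, y⟫ := fun x y =>
      LinearIsometry.inner_map_map ⟨(UH s).toLinearMap, hUHiso s⟩ x y
    have hb : UH s (UH (-s) b) = b := by
      have h0 : UH (s + -s) b = UH s (UH (-s) b) := by rw [hUHgrp]; rfl
      rw [← h0]; simp [hUH0]
    calc ⟪UH s a, b⟫ = ⟪UH s a, UH s (UH (-s) b)⟫ := by rw [hb]
    _ = ⟪a, UH (-s) b⟫ := hiso a _
  have hUHadj' : ∀ (s : ℝ) (a b : H), ⟪UH (-s) a, b⟫ = ⟪a, UH s b⟫ := by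
    intro s a b
    have h := hUHadj (-s) a b
    rwa [neg_neg] at h
  -- key pointwise bound on the dense domains
  have key : ∀ y ∈ DH, ∀ x ∈ DK, ‖(⟪y, T x⟫ : ℂ)‖ ≤ δ * |t| * (‖y‖ * ‖x‖) := by
    intro y hy x hx
    set yD : DH := ⟨y, hy⟩ with hyD
    set xD : DK := ⟨x, hx⟩ with hxD
    set f : ℝ → ℂ := fun s => ⟪UH (-s) y, adjoint u (UK (t - s) x)⟫ with hf
    set F : ℝ → ℂ := fun s => -(Complex.I * ⟪UH (-s) y, C (UK (t - s) x)⟫) with hF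
    have hderiv : ∀ s : ℝ, HasDerivAt f (F s) s := by
      intro s
      have hcneg : HasDerivAt (fun s : ℝ => -s) (-1 : ℝ) s := (hasDerivAt_id s).neg
      have ha : HasDerivAt (fun s : ℝ => UH (-s) y) (Complex.I • UH (-s) (Hop yD)) s := by
        have h2 := HasDerivAt.scomp_of_eq s (hgenH yD (-s)) hcneg rfl
        have : ((-1 : ℝ) • UH (-s) (-(Complex.I • Hop yD))) = Complex.I • UH (-s) (Hop yD) := by
          simp [map_smul]
        rw [this] at h2
        exact h2
      have hc2 : HasDerivAt (fun s : ℝ => t - s) (-1 : ℝ) s := (hasDerivAt_id s).const_sub t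
      have hb : HasDerivAt (fun s : ℝ => UK (t - s) x) (Complex.I • UK (t - s) (hop xD)) s := by
        have h2 := HasDerivAt.scomp_of_eq s (hgenK xD (t - s)) hc2 rfl
        have : ((-1 : ℝ) • UK (t - s) (-(Complex.I • hop xD))) = Complex.I • UK (t - s) (hop xD) := by
          simp [map_smul]
        rw [this] at h2
        exact h2
      have hb' : HasDerivAt (fun s : ℝ => adjoint u (UK (t - s) x))
          (adjoint u (Complex.I • UK (t - s) (hop xD))) s := by
        have h2 := ((adjoint u).restrictScalars ℝ).hasFDerivAt.comp_hasDerivAt s hb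
        simpa [Function.comp_def] using h2
      have hsum := HasDerivAt.inner ℂ ha hb'
      -- now identify the derivative value with F s
      have hval : ⟪UH (-s) y, adjoint u (Complex.I • UK (t - s) (hop xD))⟫
          + ⟪Complex.I • UH (-s) (Hop yD), adjoint u (UK (t - s) x)⟫ = F s := by
        set z : K := UK (t - s) x with hz
        have hzmem : z ∈ DK := hUKdom (t - s) x hx
        set zD : DK := ⟨z, hzmem⟩ with hzD
        set uzD : DH := ⟨adjoint u (zD : K), hadjdom (zD : K) zD.2⟩ with huzD
        -- commute hop with UK
        have hcomK : UK (t - s) (hop xD) = hop zD := by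
          have := gen_commute DK hop UK hUK0 hUKgrp hUKdom hgenK xD (t - s)
          rw [← this]
        -- term 1
        have hterm1 : (⟪UH (-s) y, adjoint u (Complex.I • UK (t - s) (hop xD))⟫ : ℂ)
            = Complex.I * ⟪UH (-s) y, adjoint u (hop zD)⟫ := by
          rw [hcomK, map_smul, inner_smul_right]
        -- term 2
        have hcomH : Hop ⟨UH s (uzD : H), hUHdom s (uzD : H) uzD.2⟩ = UH s (Hop uzD) :=
          gen_commute DH Hop UH hUH0 hUHgrp hUHdom hgenH uzD s
        have hterm2 : (⟪Complex.I • UH (-s) (Hop yD), adjoint u (UK (t - s) x)⟫ : ℂ)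
            = -(Complex.I * ⟪UH (-s) y, Hop uzD⟫) := by
          have e1 : (⟪UH (-s) (Hop yD), adjoint u z⟫ : ℂ) = ⟪(Hop yD : H), UH s (adjoint u z)⟫ :=
            hUHadj' s (Hop yD) (adjoint u z)
          have e2 : (⟪(Hop yD : H), UH s (adjoint u z)⟫ : ℂ)
              = ⟪(yD : H), Hop ⟨UH s (uzD : H), hUHdom s (uzD : H) uzD.2⟩⟫ :=
            hsymH yD ⟨UH s (uzD : H), hUHdom s (uzD : H) uzD.2⟩
          have e3 : (⟪(yD : H), UH s (Hop uzD)⟫ : ℂ) = ⟪UH (-s) y, Hop uzD⟫ :=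
            (hUHadj' s y (Hop uzD)).symm
          rw [inner_smul_left, Complex.conj_I]
          rw [show (⟪UH (-s) (Hop yD), adjoint u (UK (t - s) x)⟫ : ℂ)
              = ⟪UH (-s) y, Hop uzD⟫ by rw [← hz] at *; rw [e1, e2, hcomH, e3]]
          ring
        rw [hterm1, hterm2, hF]
        have hdef := hdefect zD
        have hCz : C z = Hop uzD - adjoint u (hop zD) := hdef
        simp only [← hz]
        rw [hCz, inner_sub_right]
        ring
      rw [hval] at hsum
      exact hsum
    have hbound : ∀ s ∈ (Set.univ : Set ℝ), ‖F s‖ ≤ δ * (‖y‖ * ‖x‖) := by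
      intro s _
      have h1 : ‖F s‖ = ‖(⟪UH (-s) y, C (UK (t - s) x)⟫ : ℂ)‖ := by
        rw [hF]; simp [norm_mul]
      rw [h1]
      calc ‖(⟪UH (-s) y, C (UK (t - s) x)⟫ : ℂ)‖
          ≤ ‖UH (-s) y‖ * ‖C (UK (t - s) x)‖ := norm_inner_le_norm _ _
        _ ≤ ‖y‖ * (δ * ‖x‖) := by
            apply mul_le_mul
            · rw [hUHiso]
            · calc ‖C (UK (t - s) x)‖ ≤ ‖C‖ * ‖UK (t - s) x‖ := C.le_opNorm _
                _ ≤ δ * ‖x‖ := by rw [hUKiso]; exact mul_le_mul_of_nonneg_right hC (norm_nonneg x)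
            · exact norm_nonneg _
            · exact norm_nonneg _
        _ = δ * (‖y‖ * ‖x‖) := by ring
    have hmvt := convex_univ.norm_image_sub_le_of_norm_hasDerivWithin_le
      (fun s _ => (hderiv s).hasDerivWithinAt) hbound (Set.mem_univ 0) (Set.mem_univ t)
    have hft : f t = ⟪y, UH t (adjoint u x)⟫ := by
      rw [hf]
      simp only [sub_self, hUK0, ContinuousLinearMap.one_apply]
      exact hUHadj' t y (adjoint u x)
    have hf0 : f 0 = ⟪y, adjoint u (UK t x)⟫ := by
      rw [hf]
      simp [hUH0]
    have hTx : (⟪y, T x⟫ : ℂ) = f t - f 0 := by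
      rw [hft, hf0, hT]
      simp [inner_sub_right]
    rw [hTx]
    calc ‖f t - f 0‖ ≤ δ * (‖y‖ * ‖x‖) * ‖t - 0‖ := hmvt
      _ = δ * |t| * (‖y‖ * ‖x‖) := by rw [sub_zero, Real.norm_eq_abs]; ring
  -- extend from DH to all of H by density
  have key2 : ∀ y : H, ∀ x ∈ DK, ‖(⟪y, T x⟫ : ℂ)‖ ≤ δ * |t| * (‖y‖ * ‖x‖) := by
    intro y x hx
    have hclosed : IsClosed {y : H | ‖(⟪y, T x⟫ : ℂ)‖ ≤ δ * |t| * (‖y‖ * ‖x‖)} := by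
      apply isClosed_le
      · exact (Continuous.inner continuous_id continuous_const).norm
      · exact continuous_const.mul (continuous_norm.mul continuous_const)
    have hsub : (DH : Set H) ⊆ {y : H | ‖(⟪y, T x⟫ : ℂ)‖ ≤ δ * |t| * (‖y‖ * ‖x‖)} :=
      fun y hy => key y hy x hx
    exact (hclosed.closure_subset_iff.mpr hsub) (hdenseH y)
  -- take y = T x to get the pointwise norm bound on DK
  have key3 : ∀ x ∈ DK, ‖T x‖ ≤ δ * |t| * ‖x‖ := by
    intro x hx
    have h := key2 (T x) x hx
    rcases eq_or_lt_of_le (norm_nonneg (T x)) with h0 | h0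
    · rw [← h0]; positivity
    · have hself : (⟪T x, T x⟫ : ℂ) = (‖T x‖ : ℂ) ^ 2 := inner_self_eq_norm_sq_to_K (T x)
      rw [hself] at h
      have hn : ‖((‖T x‖ : ℂ)) ^ 2‖ = ‖T x‖ * ‖T x‖ := by
        rw [norm_pow, Complex.norm_real, Real.norm_eq_abs, abs_of_nonneg (norm_nonneg _), sq]
      rw [hn] at h
      have := le_of_mul_le_mul_right (by linarith [h] : ‖T x‖ * ‖T x‖ ≤ (δ * |t| * ‖x‖) * ‖T x‖) h0
      linarith
  -- extend from DK to all of K by density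
  have key4 : ∀ x : K, ‖T x‖ ≤ δ * |t| * ‖x‖ := by
    intro x
    have hclosed : IsClosed {x : K | ‖T x‖ ≤ δ * |t| * ‖x‖} := by
      apply isClosed_le
      · exact T.continuous.norm
      · exact continuous_const.mul continuous_norm
    exact (hclosed.closure_subset_iff.mpr key3) (hdenseK x)
  exact T.opNorm_le_bound hM0 key4
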